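/- Let T(n) denote the maximum number h of partitions P_1,…,P_h of {1,…,n} into blocks of size exactly r+1 such that any two blocks from different partitions intersect in at most one element, where n = (r+1)^g. Then T((r+1)^g) ≥ (f^g − 1)/(f − 1), where f = N(r+1) + 1 and N(r+1) is the maximum number of mutually orthogonal Latin squares of order r+1. -/

import Mathlib

open Finset

/-- `P` is a partition of `Fin n` into blocks of size exactly `s`. -/
def IsPartitionInto {n : ℕ} (P : Finset (Finset (Fin n))) (s : ℕ) : Prop :=
  (∀ B ∈ P, B.card = s) ∧ ∀ x : Fin n, ∃! B, B ∈ P ∧ x ∈ B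

/-- `L` is a Latin square of order `q` (each row and each column is a bijection). -/
def IsLatinSquare (q : ℕ) (L : Fin q → Fin q → Fin q) : Prop :=
  (∀ a, Function.Bijective (L a)) ∧ (∀ b, Function.Bijective (fun a => L a b))

/-- Two Latin squares of order `q` are orthogonal. -/
def OrthLatin (q : ℕ) (L₁ L₂ : Fin q → Fin q → Fin q) : Prop :=
  Function.Injective (fun p : Fin q × Fin q => (L₁ p.1 p.2, L₂ p.1 p.2))

/-- `N(q)`: the maximum number of mutually orthogonal Latin squares of order `q`. -/
noncomputable def numMOLS (q : ℕ) : ℕ :=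
  sSup {s | ∃ L : Fin s → (Fin q → Fin q → Fin q),
    (∀ i, IsLatinSquare q (L i)) ∧ ∀ i j, i ≠ j → OrthLatin q (L i) (L j)}

/-- `T(n)`: the maximum number `h` of partitions `P_1, …, P_h` of `[n]` into blocks of
size exactly `r+1` such that any two blocks from different partitions intersect in at
most one element. -/
noncomputable def maxNearOrthPartitions (n r : ℕ) : ℕ :=
  sSup {h | ∃ P : Fin h → Finset (Finset (Fin n)),
    (∀ i, IsPartitionInto (P i) (r + 1)) ∧
    ∀ i j, i ≠ j → ∀ B ∈ P i, ∀ B' ∈ P j, (B ∩ B').card ≤ 1}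


namespace S12

variable {n q : ℕ}

/-- Column block: `{x} × Fin q` inside `Fin (n*q)`. -/
def colBlock (q : ℕ) (x : Fin n) : Finset (Fin (n * q)) :=
  univ.image (fun b : Fin q => finProdFinEquiv (x, b))

lemma mem_colBlock {x : Fin n} {y : Fin (n * q)} :
    y ∈ colBlock q x ↔ (finProdFinEquiv.symm y).1 = x := by
  simp only [colBlock, mem_image, mem_univ, true_and]
  constructor
  · rintro ⟨b, rfl⟩; simp
  · intro h
    exact ⟨(finProdFinEquiv.symm y).2, by rw [← h]; exact finProdFinEquiv.apply_symm_apply y⟩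

lemma card_colBlock (x : Fin n) : (colBlock q x).card = q := by
  rw [colBlock, card_image_of_injective _ (fun b b' hb => by
    simpa using (finProdFinEquiv.injective hb))]
  simp


/-- Graph block of a "Latin square" `M` over base block `B`. -/
noncomputable def grBlock (M : Fin q → Fin q → Fin q) (hM : ∀ a, Function.Bijective (M a))
    (B : Finset (Fin n)) (hB : B.card = q) (c : Fin q) : Finset (Fin (n * q)) :=
  univ.image fun a : Fin q =>
    finProdFinEquiv ((B.orderIsoOfFin hB a : Fin n), (Equiv.ofBijective (M a) (hM a)).symm c)

lemma phi_injective (B : Finset (Fin n)) (hB : B.card = q) :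
    Function.Injective (fun a : Fin q => (B.orderIsoOfFin hB a : Fin n)) :=
  fun _ _ h => (B.orderIsoOfFin hB).injective (Subtype.ext h)

lemma phi_inj' (B : Finset (Fin n)) (hB : B.card = q) {a a' : Fin q}
    (h : (B.orderIsoOfFin hB a : Fin n) = (B.orderIsoOfFin hB a' : Fin n)) : a = a' :=
  (B.orderIsoOfFin hB).injective (Subtype.ext h)

lemma mem_grBlock {M : Fin q → Fin q → Fin q} {hM : ∀ a, Function.Bijective (M a)}
    {B : Finset (Fin n)} {hB : B.card = q} {c : Fin q} {y : Fin (n * q)} :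
    y ∈ grBlock M hM B hB c ↔
      ∃ a : Fin q, (B.orderIsoOfFin hB a : Fin n) = (finProdFinEquiv.symm y).1 ∧
        M a (finProdFinEquiv.symm y).2 = c := by
  simp only [grBlock, mem_image, mem_univ, true_and]
  constructor
  · rintro ⟨a, rfl⟩
    refine ⟨a, by simp, ?_⟩
    simp only [Equiv.symm_apply_apply]
    exact (Equiv.ofBijective (M a) (hM a)).apply_symm_apply c
  · rintro ⟨a, ha1, ha2⟩
    refine ⟨a, ?_⟩
    have hb : (Equiv.ofBijective (M a) (hM a)).symm c = (finProdFinEquiv.symm y).2 :=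
      (Equiv.symm_apply_eq _).2 ha2.symm
    rw [ha1, hb]
    exact finProdFinEquiv.apply_symm_apply y

lemma card_grBlock {M : Fin q → Fin q → Fin q} (hM : ∀ a, Function.Bijective (M a))
    (B : Finset (Fin n)) (hB : B.card = q) (c : Fin q) :
    (grBlock M hM B hB c).card = q := by
  rw [grBlock, card_image_of_injective _ ?_]
  · simp
  · intro a a' h
    have := finProdFinEquiv.injective h
    exact phi_injective B hB (congrArg Prod.fst this)

lemma fst_mem_of_mem_grBlock {M : Fin q → Fin q → Fin q} {hM : ∀ a, Function.Bijective (M a)}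
    {B : Finset (Fin n)} {hB : B.card = q} {c : Fin q} {y : Fin (n * q)}
    (hy : y ∈ grBlock M hM B hB c) : (finProdFinEquiv.symm y).1 ∈ B := by
  obtain ⟨a, ha1, -⟩ := mem_grBlock.1 hy
  rw [← ha1]
  exact (B.orderIsoOfFin hB a).2

lemma col_gr_inter {x : Fin n} {M : Fin q → Fin q → Fin q} {hM : ∀ a, Function.Bijective (M a)}
    {B : Finset (Fin n)} {hB : B.card = q} {c : Fin q} :
    (colBlock q x ∩ grBlock M hM B hB c).card ≤ 1 := by
  rw [card_le_one]
  intro y hy z hz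
  rw [mem_inter] at hy hz
  obtain ⟨hy1, hy2⟩ := hy
  obtain ⟨hz1, hz2⟩ := hz
  rw [mem_colBlock] at hy1 hz1
  obtain ⟨a, ha1, ha2⟩ := mem_grBlock.1 hy2
  obtain ⟨a', ha1', ha2'⟩ := mem_grBlock.1 hz2
  have haa : a = a' := phi_inj' B hB (ha1.trans (hy1.trans (hz1.symm.trans ha1'.symm)))
  have h2 : (finProdFinEquiv.symm y).2 = (finProdFinEquiv.symm z).2 := by
    refine (hM a).injective ?_
    rw [ha2, haa, ha2']
  have : finProdFinEquiv.symm y = finProdFinEquiv.symm z :=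
    Prod.ext (hy1.trans hz1.symm) h2
  exact finProdFinEquiv.symm.injective this

lemma gr_gr_inter_cross {M M' : Fin q → Fin q → Fin q}
    {hM : ∀ a, Function.Bijective (M a)} {hM' : ∀ a, Function.Bijective (M' a)}
    {B B' : Finset (Fin n)} {hB : B.card = q} {hB' : B'.card = q} {c c' : Fin q}
    (hBB : (B ∩ B').card ≤ 1) :
    (grBlock M hM B hB c ∩ grBlock M' hM' B' hB' c').card ≤ 1 := by
  rw [card_le_one]
  intro y hy z hz
  rw [mem_inter] at hy hz
  obtain ⟨hy1, hy2⟩ := hy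
  obtain ⟨hz1, hz2⟩ := hz
  have hx : (finProdFinEquiv.symm y).1 = (finProdFinEquiv.symm z).1 := by
    rw [card_le_one] at hBB
    exact hBB _ (mem_inter.2 ⟨fst_mem_of_mem_grBlock hy1, fst_mem_of_mem_grBlock hy2⟩)
      _ (mem_inter.2 ⟨fst_mem_of_mem_grBlock hz1, fst_mem_of_mem_grBlock hz2⟩)
  obtain ⟨a, ha1, ha2⟩ := mem_grBlock.1 hy1
  obtain ⟨a', ha1', ha2'⟩ := mem_grBlock.1 hz1
  have haa : a = a' := phi_inj' B hB (ha1.trans (hx.trans ha1'.symm))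
  have h2 : (finProdFinEquiv.symm y).2 = (finProdFinEquiv.symm z).2 := by
    refine (hM a).injective ?_
    rw [ha2, haa, ha2']
  exact finProdFinEquiv.symm.injective (Prod.ext hx h2)

lemma gr_gr_inter_same {M M' : Fin q → Fin q → Fin q}
    {hM : ∀ a, Function.Bijective (M a)} {hM' : ∀ a, Function.Bijective (M' a)}
    {B : Finset (Fin n)} {hB : B.card = q} {c c' : Fin q}
    (hinj : Function.Injective (fun p : Fin q × Fin q => (M p.1 p.2, M' p.1 p.2))) :
    (grBlock M hM B hB c ∩ grBlock M' hM' B hB c').card ≤ 1 := by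
  rw [card_le_one]
  intro y hy z hz
  rw [mem_inter] at hy hz
  obtain ⟨hy1, hy2⟩ := hy
  obtain ⟨hz1, hz2⟩ := hz
  obtain ⟨a, ha1, ha2⟩ := mem_grBlock.1 hy1
  obtain ⟨b, hb1, hb2⟩ := mem_grBlock.1 hy2
  have hab : b = a := phi_inj' B hB (hb1.trans ha1.symm)
  obtain ⟨a', ha1', ha2'⟩ := mem_grBlock.1 hz1
  obtain ⟨b', hb1', hb2'⟩ := mem_grBlock.1 hz2
  have hab' : b' = a' := phi_inj' B hB (hb1'.trans ha1'.symm)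
  subst hab
  subst hab'
  have key : (b, (finProdFinEquiv.symm y).2) = (b', (finProdFinEquiv.symm z).2) := by
    refine hinj ?_
    change (M b (finProdFinEquiv.symm y).2, M' b (finProdFinEquiv.symm y).2) =
      (M b' (finProdFinEquiv.symm z).2, M' b' (finProdFinEquiv.symm z).2)
    rw [ha2, ha2', hb2, hb2']
  rw [Prod.mk.injEq] at key
  obtain ⟨haeq, hseq⟩ := key
  have h1 : (finProdFinEquiv.symm y).1 = (finProdFinEquiv.symm z).1 := by
    rw [← ha1, ← ha1', haeq]
  exact finProdFinEquiv.symm.injective (Prod.ext h1 hseq)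


/-- The column partition of `Fin (n*q)`. -/
def colPart (n q : ℕ) : Finset (Finset (Fin (n * q))) := univ.image (colBlock q)

lemma isPartition_colPart (n q : ℕ) : IsPartitionInto (colPart n q) q := by
  constructor
  · intro B hB
    obtain ⟨x, -, rfl⟩ := mem_image.1 hB
    exact card_colBlock x
  · intro y
    refine ⟨colBlock q (finProdFinEquiv.symm y).1, ⟨mem_image_of_mem _ (mem_univ _), ?_⟩, ?_⟩
    · exact mem_colBlock.2 rfl
    · rintro B ⟨hB, hyB⟩
      obtain ⟨x, -, rfl⟩ := mem_image.1 hB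
      rw [mem_colBlock.1 hyB]

/-- The partition of `Fin (n*q)` obtained from a partition `P` of `Fin n` and a Latin square. -/
noncomputable def grPart (M : Fin q → Fin q → Fin q) (hM : ∀ a, Function.Bijective (M a))
    (P : Finset (Finset (Fin n))) (hP : ∀ B ∈ P, B.card = q) :
    Finset (Finset (Fin (n * q))) :=
  P.attach.biUnion fun B => univ.image (grBlock M hM B.1 (hP B.1 B.2))

lemma mem_grPart {M : Fin q → Fin q → Fin q} {hM : ∀ a, Function.Bijective (M a)}
    {P : Finset (Finset (Fin n))} {hP : ∀ B ∈ P, B.card = q} {D : Finset (Fin (n * q))} :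
    D ∈ grPart M hM P hP ↔ ∃ B, ∃ hB : B ∈ P, ∃ c, D = grBlock M hM B (hP B hB) c := by
  constructor
  · intro hD
    rw [grPart, mem_biUnion] at hD
    obtain ⟨⟨B, hBP⟩, -, hD⟩ := hD
    rw [mem_image] at hD
    obtain ⟨c, -, rfl⟩ := hD
    exact ⟨B, hBP, c, rfl⟩
  · rintro ⟨B, hBP, c, rfl⟩
    rw [grPart, mem_biUnion]
    exact ⟨⟨B, hBP⟩, mem_attach _ _, mem_image_of_mem _ (mem_univ c)⟩

lemma isPartition_grPart {M : Fin q → Fin q → Fin q} (hM : ∀ a, Function.Bijective (M a))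
    {P : Finset (Finset (Fin n))} (hP : IsPartitionInto P q) :
    IsPartitionInto (grPart M hM P hP.1) q := by
  constructor
  · intro D hD
    obtain ⟨B, hB, c, rfl⟩ := mem_grPart.1 hD
    exact card_grBlock hM B _ c
  · intro y
    obtain ⟨B, ⟨hBP, hxB⟩, hBuniq⟩ := hP.2 (finProdFinEquiv.symm y).1
    set a : Fin q := (B.orderIsoOfFin (hP.1 B hBP)).symm ⟨_, hxB⟩ with ha
    have hφa : (B.orderIsoOfFin (hP.1 B hBP) a : Fin n) = (finProdFinEquiv.symm y).1 := by
      rw [ha, OrderIso.apply_symm_apply]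
    refine ⟨grBlock M hM B (hP.1 B hBP) (M a (finProdFinEquiv.symm y).2), ⟨?_, ?_⟩, ?_⟩
    · exact mem_grPart.2 ⟨B, hBP, _, rfl⟩
    · exact mem_grBlock.2 ⟨a, hφa, rfl⟩
    · rintro D ⟨hD, hyD⟩
      obtain ⟨B', hB', c', rfl⟩ := mem_grPart.1 hD
      obtain ⟨a', ha1', ha2'⟩ := mem_grBlock.1 hyD
      have hBB : B' = B := by
        refine hBuniq B' ⟨hB', ?_⟩
        rw [← ha1']
        exact (B'.orderIsoOfFin (hP.1 B' hB') a').2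
      subst hBB
      have haa : a' = a := phi_inj' B' (hP.1 B' hB') (ha1'.trans hφa.symm)
      rw [← ha2', haa]


lemma partition_eq_of_mem {s : ℕ} {P : Finset (Finset (Fin n))} (hP : IsPartitionInto P s)
    {B B' : Finset (Fin n)} (hB : B ∈ P) (hB' : B' ∈ P) {x : Fin n}
    (hx : x ∈ B) (hx' : x ∈ B') : B = B' := by
  obtain ⟨C, -, hU⟩ := hP.2 x
  exact (hU B ⟨hB, hx⟩).trans (hU B' ⟨hB', hx'⟩).symm

lemma key {f h : ℕ} (M : Fin f → Fin q → Fin q → Fin q)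
    (hMa : ∀ m a, Function.Bijective (M m a))
    (hMo : ∀ m m', m ≠ m' →
      Function.Injective (fun p : Fin q × Fin q => (M m p.1 p.2, M m' p.1 p.2)))
    (P : Fin h → Finset (Finset (Fin n)))
    (hP : ∀ i, IsPartitionInto (P i) q)
    (hPP : ∀ i j, i ≠ j → ∀ B ∈ P i, ∀ B' ∈ P j, (B ∩ B').card ≤ 1) :
    ∃ Q : Fin (f * h + 1) → Finset (Finset (Fin (n * q))),
      (∀ i, IsPartitionInto (Q i) q) ∧
      ∀ i j, i ≠ j → ∀ B ∈ Q i, ∀ B' ∈ Q j, (B ∩ B').card ≤ 1 := by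
  classical
  let G : Fin (f * h + 1) ≃ (Fin f × Fin h) ⊕ Fin 1 :=
    finSumFinEquiv.symm.trans (Equiv.sumCongr finProdFinEquiv.symm (Equiv.refl _))
  let F : (Fin f × Fin h) ⊕ Fin 1 → Finset (Finset (Fin (n * q))) :=
    Sum.elim (fun mk => grPart (M mk.1) (hMa mk.1) (P mk.2) (hP mk.2).1)
      (fun _ => colPart n q)
  have hFpart : ∀ u, IsPartitionInto (F u) q := by
    rintro (mk | u)
    · exact isPartition_grPart (hMa mk.1) (hP mk.2)
    · exact isPartition_colPart n q
  have hFpair : ∀ u v, u ≠ v → ∀ D ∈ F u, ∀ D' ∈ F v, (D ∩ D').card ≤ 1 := by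
    rintro (mk | u) (mk' | u') huv D hD D' hD'
    · -- gr vs gr
      have hD2 : D ∈ grPart (M mk.1) (hMa mk.1) (P mk.2) (hP mk.2).1 := hD
      have hD2' : D' ∈ grPart (M mk'.1) (hMa mk'.1) (P mk'.2) (hP mk'.2).1 := hD'
      obtain ⟨B, hBk, c, hDe⟩ := mem_grPart.1 hD2
      obtain ⟨B', hBk', c', hDe'⟩ := mem_grPart.1 hD2'
      rw [hDe, hDe']
      by_cases hk : mk.2 = mk'.2
      · have hm : mk.1 ≠ mk'.1 := by
          intro e; exact huv (by rw [Prod.ext e hk])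
        have hBk'' : B' ∈ P mk.2 := by rw [hk]; exact hBk'
        by_cases hBB : B = B'
        · subst hBB
          exact gr_gr_inter_same (hMo _ _ hm)
        · refine gr_gr_inter_cross ?_
          have : B ∩ B' = ∅ := by
            rw [eq_empty_iff_forall_notMem]
            intro x hx
            rw [mem_inter] at hx
            exact hBB (partition_eq_of_mem (hP mk.2) hBk hBk'' hx.1 hx.2)
          rw [this]
          simp
      · exact gr_gr_inter_cross (hPP mk.2 mk'.2 hk B hBk B' hBk')
    · -- gr vs col
      have hD2 : D ∈ grPart (M mk.1) (hMa mk.1) (P mk.2) (hP mk.2).1 := hD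
      have hD2' : D' ∈ colPart n q := hD'
      obtain ⟨B, hBk, c, hDe⟩ := mem_grPart.1 hD2
      obtain ⟨x, -, rfl⟩ := mem_image.1 hD2'
      rw [hDe, inter_comm]
      exact col_gr_inter
    · -- col vs gr
      have hD2 : D ∈ colPart n q := hD
      have hD2' : D' ∈ grPart (M mk'.1) (hMa mk'.1) (P mk'.2) (hP mk'.2).1 := hD'
      obtain ⟨x, -, rfl⟩ := mem_image.1 hD2
      obtain ⟨B, hBk, c, hDe⟩ := mem_grPart.1 hD2'
      rw [hDe]
      exact col_gr_inter
    · exact absurd (congrArg Sum.inr (Subsingleton.elim u u')) huv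
  refine ⟨fun i => F (G i), fun i => hFpart (G i), fun i j hij => ?_⟩
  exact hFpair (G i) (G j) (fun e => hij (G.injective e))


lemma base (q : ℕ) :
    ∃ P : Fin 1 → Finset (Finset (Fin q)),
      (∀ i, IsPartitionInto (P i) q) ∧
      ∀ i j, i ≠ j → ∀ B ∈ P i, ∀ B' ∈ P j, (B ∩ B').card ≤ 1 := by
  refine ⟨fun _ => {univ}, ?_, ?_⟩
  · intro i
    constructor
    · intro B hB
      rw [mem_singleton] at hB
      subst hB
      simp
    · intro x
      refine ⟨univ, ⟨mem_singleton_self _, mem_univ x⟩, ?_⟩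
      rintro B ⟨hB, -⟩
      rwa [mem_singleton] at hB
  · intro i j hij
    exact absurd (Subsingleton.elim i j) hij

lemma exists_mols (q : ℕ) (hq : 2 ≤ q) :
    ∃ L : Fin (numMOLS q) → (Fin q → Fin q → Fin q),
      (∀ i, IsLatinSquare q (L i)) ∧ ∀ i j, i ≠ j → OrthLatin q (L i) (L j) := by
  have h0 : (0 : ℕ) ∈ {s | ∃ L : Fin s → (Fin q → Fin q → Fin q),
      (∀ i, IsLatinSquare q (L i)) ∧ ∀ i j, i ≠ j → OrthLatin q (L i) (L j)} :=
    ⟨fun i => i.elim0, fun i => i.elim0, fun i => i.elim0⟩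
  have hbdd : BddAbove {s | ∃ L : Fin s → (Fin q → Fin q → Fin q),
      (∀ i, IsLatinSquare q (L i)) ∧ ∀ i j, i ≠ j → OrthLatin q (L i) (L j)} := by
    refine ⟨Fintype.card (Fin q → Fin q → Fin q), ?_⟩
    rintro s ⟨L, hL, hLo⟩
    have hinj : Function.Injective L := by
      intro i j hij
      by_contra hne
      have horth : OrthLatin q (L i) (L i) := by
        have := hLo i j hne
        rwa [← hij] at this
      have hF : Function.Injective (fun p : Fin q × Fin q => L i p.1 p.2) := by
        intro p p' hpp
        exact horth (congrArg (fun t => (t, t)) hpp)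
      have hcard := Fintype.card_le_of_injective _ hF
      simp only [Fintype.card_prod, Fintype.card_fin] at hcard
      nlinarith
    simpa using Fintype.card_le_of_injective L hinj
  exact Nat.sSup_mem ⟨0, h0⟩ hbdd

lemma exists_M (q : ℕ) (hq : 2 ≤ q) :
    ∃ M : Fin (numMOLS q + 1) → Fin q → Fin q → Fin q,
      (∀ m a, Function.Bijective (M m a)) ∧
      ∀ m m', m ≠ m' →
        Function.Injective (fun p : Fin q × Fin q => (M m p.1 p.2, M m' p.1 p.2)) := by
  obtain ⟨L, hL, hLo⟩ := exists_mols q hq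
  refine ⟨Fin.cases (fun _ b => b) L, ?_, ?_⟩
  · intro m a
    induction m using Fin.cases with
    | zero => simp only [Fin.cases_zero]; exact Function.bijective_id
    | succ i => simpa using (hL i).1 a
  · intro m m' hmm
    induction m using Fin.cases with
    | zero =>
      induction m' using Fin.cases with
      | zero => exact absurd rfl hmm
      | succ j =>
        simp only [Fin.cases_zero, Fin.cases_succ]
        intro p p' hpp
        simp only [Prod.mk.injEq] at hpp
        obtain ⟨h2, h3⟩ := hpp
        rw [h2] at h3
        have h1 : p.1 = p'.1 := ((hL j).2 p'.2).injective h3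
        exact Prod.ext h1 h2
    | succ i =>
      induction m' using Fin.cases with
      | zero =>
        simp only [Fin.cases_zero, Fin.cases_succ]
        intro p p' hpp
        simp only [Prod.mk.injEq] at hpp
        obtain ⟨h3, h2⟩ := hpp
        rw [h2] at h3
        have h1 : p.1 = p'.1 := ((hL i).2 p'.2).injective h3
        exact Prod.ext h1 h2
      | succ j =>
        have hij : i ≠ j := fun e => hmm (congrArg Fin.succ e)
        simp only [Fin.cases_succ]
        exact hLo i j hij

lemma exists_family (q : ℕ) (hq : 2 ≤ q) :
    ∀ g, 1 ≤ g →
      ∃ P : Fin (∑ i ∈ Finset.range g, (numMOLS q + 1) ^ i) → Finset (Finset (Fin (q ^ g))),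
        (∀ i, IsPartitionInto (P i) q) ∧
        ∀ i j, i ≠ j → ∀ B ∈ P i, ∀ B' ∈ P j, (B ∩ B').card ≤ 1 := by
  intro g
  induction g with
  | zero => omega
  | succ g ih =>
    intro _
    rcases Nat.eq_zero_or_pos g with hg | hg
    · subst hg
      have e1 : ∑ i ∈ Finset.range 1, (numMOLS q + 1) ^ i = 1 := by simp
      rw [e1, pow_one]
      exact base q
    · obtain ⟨P, hP, hPP⟩ := ih hg
      obtain ⟨M, hMa, hMo⟩ := exists_M q hq
      have hsum : ∑ i ∈ Finset.range (g + 1), (numMOLS q + 1) ^ i =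
          (numMOLS q + 1) * (∑ i ∈ Finset.range g, (numMOLS q + 1) ^ i) + 1 := by
        rw [Finset.sum_range_succ']
        simp [pow_succ', Finset.mul_sum]
      rw [hsum, pow_succ]
      exact key M hMa hMo P hP hPP

lemma geom (f' : ℕ) : ∀ g, (f' + 1) ^ g - 1 = f' * ∑ i ∈ Finset.range g, (f' + 1) ^ i := by
  intro g
  induction g with
  | zero => simp
  | succ g ih =>
    have h1 : 1 ≤ (f' + 1) ^ g := Nat.one_le_pow _ _ (by omega)
    rw [Finset.sum_range_succ, Nat.mul_add, ← ih, pow_succ, Nat.mul_succ,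
      Nat.add_sub_assoc h1, Nat.add_comm, Nat.mul_comm]

lemma tset_bdd (n r : ℕ) (hn : 0 < n) (hr : 1 ≤ r) :
    BddAbove {h | ∃ P : Fin h → Finset (Finset (Fin n)),
      (∀ i, IsPartitionInto (P i) (r + 1)) ∧
      ∀ i j, i ≠ j → ∀ B ∈ P i, ∀ B' ∈ P j, (B ∩ B').card ≤ 1} := by
  refine ⟨Fintype.card (Finset (Finset (Fin n))), ?_⟩
  rintro h ⟨P, hP, hPP⟩
  have hinj : Function.Injective P := by
    intro i j hij
    by_contra hne
    obtain ⟨B, ⟨hBP, -⟩, -⟩ := (hP i).2 ⟨0, hn⟩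
    have hBq := (hP i).1 B hBP
    have hBj : B ∈ P j := hij ▸ hBP
    have := hPP i j hne B hBP B hBj
    rw [inter_self, hBq] at this
    omega
  simpa using Fintype.card_le_of_injective P hinj

end S12

/-- `T((r+1)^g) ≥ (f^g - 1)/(f - 1)` where `f = N(r+1) + 1` and `N(r+1)` is the maximum
number of mutually orthogonal Latin squares of order `r+1`. -/
theorem stmt12 (r g : ℕ) (hr : 1 ≤ r) (hg : 1 ≤ g) :
    ((numMOLS (r + 1) + 1) ^ g - 1) / (numMOLS (r + 1) + 1 - 1) ≤
      maxNearOrthPartitions ((r + 1) ^ g) r := by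
  rcases Nat.eq_zero_or_pos (numMOLS (r + 1)) with hN | hN
  · simp [hN]
  · have hq : 2 ≤ r + 1 := by omega
    obtain ⟨P, hP, hPP⟩ := S12.exists_family (r + 1) hq g hg
    have hnpos : 0 < (r + 1) ^ g := Nat.pow_pos (by omega)
    have hmem : (∑ i ∈ Finset.range g, (numMOLS (r + 1) + 1) ^ i) ∈
        {h | ∃ P : Fin h → Finset (Finset (Fin ((r + 1) ^ g))),
          (∀ i, IsPartitionInto (P i) (r + 1)) ∧
          ∀ i j, i ≠ j → ∀ B ∈ P i, ∀ B' ∈ P j, (B ∩ B').card ≤ 1} := ⟨P, hP, hPP⟩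
    have hle : (∑ i ∈ Finset.range g, (numMOLS (r + 1) + 1) ^ i) ≤
        maxNearOrthPartitions ((r + 1) ^ g) r :=
      le_csSup (S12.tset_bdd _ r hnpos hr) hmem
    refine le_trans (le_of_eq ?_) hle
    rw [S12.geom (numMOLS (r + 1)) g]
    simp [Nat.mul_div_cancel_left _ hN]
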